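/- Let P ⊆ R^d be a nonempty polytope and F a nonempty face of P. Then dim(F) + dim(C_P(F)) = d. -/

import Mathlib

open Set Pointwise

noncomputable section

/-- Dot product of two vectors in `Fin n → ℝ`. -/
def dotp {n : ℕ} (c x : Fin n → ℝ) : ℝ := ∑ i, c i * x i

/-- Dimension of a subset of `Fin n → ℝ` (dimension of its affine hull). -/
def sdim {n : ℕ} (S : Set (Fin n → ℝ)) : ℕ := Module.finrank ℝ (vectorSpan ℝ S)

/-- A polytope is the convex hull of a finite set. -/
def IsPolytope {n : ℕ} (P : Set (Fin n → ℝ)) : Prop :=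
  ∃ S : Finset (Fin n → ℝ), P = convexHull ℝ (S : Set (Fin n → ℝ))

/-- The set of maximizers of the linear functional `dotp c` over `P`. -/
def maxFace {n : ℕ} (P : Set (Fin n → ℝ)) (c : Fin n → ℝ) : Set (Fin n → ℝ) :=
  {x ∈ P | ∀ y ∈ P, dotp c y ≤ dotp c x}

/-- `F` is a (nonempty, possibly improper) face of the polytope `P`: the set of
maximizers of some linear functional over `P`. -/
def IsFaceOf {n : ℕ} (P F : Set (Fin n → ℝ)) : Prop := ∃ c, F = maxFace P c

/-- The optimality cone of a face `F` of `P`: the set of `c` whose set of maximizers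
over `P` is exactly `F`. -/
def optCone {n : ℕ} (P F : Set (Fin n → ℝ)) : Set (Fin n → ℝ) := {c | maxFace P c = F}

/-- A facet: a nonempty face of codimension 1. -/
def IsFacetOf {n : ℕ} (P F : Set (Fin n → ℝ)) : Prop :=
  IsFaceOf P F ∧ F.Nonempty ∧ sdim F + 1 = sdim P

/-- Embedding of a subset of `Fin d → ℝ` at height `α` in `Fin (d+1) → ℝ`. -/
def cay {d : ℕ} (α : ℝ) (S : Set (Fin d → ℝ)) : Set (Fin (d + 1) → ℝ) :=
  (fun x => Fin.snoc x α) '' S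

/-- Orthogonal projection onto the first `d` coordinates. -/
def projd {d m : ℕ} (x : Fin (d + m) → ℝ) : Fin d → ℝ := fun i => x (Fin.castAdd m i)

/-- Width of a set in direction `c`. -/
def width {n : ℕ} (S : Set (Fin n → ℝ)) (c : Fin n → ℝ) : ℝ :=
  sSup (dotp c '' S) - sInf (dotp c '' S)

/-- `P'` is an `ε`-approximation of `P`. -/
def EpsApprox {n : ℕ} (ε : ℝ) (P P' : Set (Fin n → ℝ)) : Prop :=
  P ⊆ P' ∧ ∀ c, width P' c ≤ (1 + ε) * width P c

/-- Binary entropy function (with the convention `0 · log₂ 0 = 0`, which holds for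
`Real.logb` since `Real.logb 2 0 = 0`). -/
def binEnt (p : ℝ) : ℝ := -(p * Real.logb 2 p) - (1 - p) * Real.logb 2 (1 - p)

namespace DimFaceAux

/-- `dotp c` as a linear map. -/
def dotL {n : ℕ} (c : Fin n → ℝ) : (Fin n → ℝ) →ₗ[ℝ] ℝ where
  toFun := dotp c
  map_add' x y := by simp [dotp, mul_add, Finset.sum_add_distrib]
  map_smul' r x := by simp [dotp, Finset.mul_sum, mul_left_comm]

lemma dotp_eq_dotL {n : ℕ} (c x : Fin n → ℝ) : dotp c x = dotL c x := rfl

lemma dotp_add_left {n : ℕ} (c u x : Fin n → ℝ) :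
    dotp (c + u) x = dotp c x + dotp u x := by
  simp [dotp, add_mul, Finset.sum_add_distrib]

lemma dotp_smul_left {n : ℕ} (r : ℝ) (c x : Fin n → ℝ) :
    dotp (r • c) x = r * dotp c x := by
  simp [dotp, Finset.mul_sum, mul_assoc]

lemma dotp_inner {n : ℕ} (c x : Fin n → ℝ) :
    dotp c x = inner (𝕜 := ℝ) (E := EuclideanSpace ℝ (Fin n)) (WithLp.toLp 2 x)
      (WithLp.toLp 2 c) := by
  simp [dotp, PiLp.inner_apply, RCLike.inner_apply, mul_comm]

lemma convexOn_dotp {d : ℕ} (c : Fin d → ℝ) (s : Set (Fin d → ℝ)) :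
    ConvexOn ℝ (convexHull ℝ s) (dotp c) := by
  refine ⟨convex_convexHull ℝ s, fun x _ y _ a b _ _ _ => ?_⟩
  simp [dotp_eq_dotL, map_add, map_smul, smul_eq_mul]

/-- Key perturbation lemma: if `dotp u` is constant on the face `maxFace P c₀` of the
polytope `P = conv S`, then for small `ε > 0`, `c₀ + ε • u` has the same face. -/
lemma perturb {d : ℕ} (S : Finset (Fin d → ℝ)) (c₀ u x₀ : Fin d → ℝ)
    (hx₀ : x₀ ∈ maxFace (convexHull ℝ (S : Set (Fin d → ℝ))) c₀)
    (hu : ∀ x ∈ maxFace (convexHull ℝ (S : Set (Fin d → ℝ))) c₀, dotp u x = dotp u x₀) :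
    ∃ ε : ℝ, 0 < ε ∧
      maxFace (convexHull ℝ (S : Set (Fin d → ℝ))) (c₀ + ε • u)
        = maxFace (convexHull ℝ (S : Set (Fin d → ℝ))) c₀ := by
  set P : Set (Fin d → ℝ) := convexHull ℝ (S : Set (Fin d → ℝ)) with hPdef
  set M₀ : ℝ := dotp c₀ x₀ with hM₀
  set A : ℝ := dotp u x₀ with hA
  have hx₀P : x₀ ∈ P := hx₀.1
  have hmax : ∀ y ∈ P, dotp c₀ y ≤ M₀ := hx₀.2
  have hPs : ∀ s ∈ S, s ∈ P := fun s hs => subset_convexHull ℝ _ hs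
  -- characterization of the face by the value of `dotp c₀`
  have memF : ∀ z, z ∈ maxFace P c₀ ↔ z ∈ P ∧ dotp c₀ z = M₀ := by
    intro z
    constructor
    · exact fun hz => ⟨hz.1, le_antisymm (hmax z hz.1) (hz.2 x₀ hx₀P)⟩
    · exact fun hz => ⟨hz.1, fun y hy => hz.2 ▸ hmax y hy⟩
  -- choice of ε
  set S' : Finset (Fin d → ℝ) := S.filter (fun s => dotp c₀ s < M₀) with hS'
  set f : (Fin d → ℝ) → ℝ := fun s => (M₀ - dotp c₀ s) / (|dotp u s - A| + 1) with hf
  set ε : ℝ := if h : S'.Nonempty then S'.inf' h f else 1 with hε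
  have hεpos : 0 < ε := by
    rw [hε]
    split
    · next h =>
      apply (Finset.lt_inf'_iff h).2
      intro s hs
      have hlt : dotp c₀ s < M₀ := (Finset.mem_filter.1 hs).2
      exact div_pos (by linarith) (by positivity)
    · exact one_pos
  have hεle : ∀ s ∈ S, dotp c₀ s < M₀ → ε ≤ f s := by
    intro s hs hlt
    have hmem : s ∈ S' := Finset.mem_filter.2 ⟨hs, hlt⟩
    rw [hε, dif_pos ⟨s, hmem⟩]
    exact Finset.inf'_le f hmem
  -- the key strict inequality for non-maximizing vertices
  have key : ∀ s ∈ S, dotp c₀ s < M₀ →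
      dotp (c₀ + ε • u) s < M₀ + ε * A := by
    intro s hs hlt
    have h1 : ε ≤ f s := hεle s hs hlt
    have hd : (0:ℝ) < |dotp u s - A| + 1 := by positivity
    have h2 : ε * (|dotp u s - A| + 1) ≤ M₀ - dotp c₀ s := by
      rw [hf] at h1
      calc ε * (|dotp u s - A| + 1) ≤ ((M₀ - dotp c₀ s) / (|dotp u s - A| + 1)) *
            (|dotp u s - A| + 1) := by
            exact mul_le_mul_of_nonneg_right h1 hd.le
        _ = M₀ - dotp c₀ s := div_mul_cancel₀ _ hd.ne'
    have h3 : ε * (dotp u s - A) ≤ ε * |dotp u s - A| :=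
      mul_le_mul_of_nonneg_left (le_abs_self _) hεpos.le
    have h4 : ε * |dotp u s - A| < ε * (|dotp u s - A| + 1) :=
      mul_lt_mul_of_pos_left (lt_add_one _) hεpos
    rw [dotp_add_left, dotp_smul_left]
    nlinarith
  -- the value of the perturbed functional on the face
  have valF : ∀ x ∈ maxFace P c₀, dotp (c₀ + ε • u) x = M₀ + ε * A := by
    intro x hx
    rw [dotp_add_left, dotp_smul_left, ((memF x).1 hx).2, hu x hx]
  -- upper bound over all of P
  have ub : ∀ y ∈ P, dotp (c₀ + ε • u) y ≤ M₀ + ε * A := by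
    intro y hy
    obtain ⟨s, hsS, hle⟩ :=
      (convexOn_dotp (c₀ + ε • u) (S : Set (Fin d → ℝ))).exists_ge_of_mem_convexHull
        (subset_convexHull ℝ _) hy
    rcases lt_or_ge (dotp c₀ s) M₀ with h | h
    · exact hle.trans (key s hsS h).le
    · have hsF : s ∈ maxFace P c₀ :=
        (memF s).2 ⟨hPs s hsS, le_antisymm (hmax s (hPs s hsS)) h⟩
      exact hle.trans_eq (valF s hsF)
  refine ⟨ε, hεpos, ?_⟩
  ext z
  constructor
  · intro hz
    have hzP : z ∈ P := hz.1
    -- the perturbed value at z is exactly the maximum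
    have hval : dotp (c₀ + ε • u) z = M₀ + ε * A :=
      le_antisymm (ub z hzP) ((valF x₀ ((memF x₀).2 ⟨hx₀P, rfl⟩)) ▸ hz.2 x₀ hx₀P)
    -- convex combination representation
    rw [hPdef, Finset.convexHull_eq] at hzP
    obtain ⟨w, hw0, hw1, hcm⟩ := hzP
    have hrep : ∀ c : Fin d → ℝ, dotp c z = ∑ s ∈ S, w s * dotp c s := by
      intro c
      rw [← hcm, Finset.centerMass_eq_of_sum_1 _ _ hw1]
      rw [dotp_eq_dotL, map_sum]
      simp [dotp_eq_dotL]
    have hzero : ∀ s ∈ S, w s * ((M₀ + ε * A) - dotp (c₀ + ε • u) s) = 0 := by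
      have hsum : ∑ s ∈ S, w s * ((M₀ + ε * A) - dotp (c₀ + ε • u) s) = 0 := by
        have : ∑ s ∈ S, w s * ((M₀ + ε * A) - dotp (c₀ + ε • u) s)
            = (∑ s ∈ S, w s) * (M₀ + ε * A) - ∑ s ∈ S, w s * dotp (c₀ + ε • u) s := by
          rw [Finset.sum_mul]
          rw [← Finset.sum_sub_distrib]
          exact Finset.sum_congr rfl fun s _ => by ring
        rw [this, hw1, ← hrep, hval]
        ring
      intro s hs
      refine (Finset.sum_eq_zero_iff_of_nonneg ?_).1 hsum s hs
      intro t ht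
      have h1 : 0 ≤ w t := hw0 t ht
      have h2 : dotp (c₀ + ε • u) t ≤ M₀ + ε * A := ub t (hPs t ht)
      nlinarith
    have wzero : ∀ s ∈ S, dotp c₀ s < M₀ → w s = 0 := by
      intro s hs hlt
      have h1 := hzero s hs
      have h2 : (M₀ + ε * A) - dotp (c₀ + ε • u) s > 0 := by
        have := key s hs hlt; linarith
      rcases mul_eq_zero.1 h1 with h | h
      · exact h
      · linarith
    have hzval : dotp c₀ z = M₀ := by
      rw [hrep c₀]
      have : ∀ s ∈ S, w s * dotp c₀ s = w s * M₀ := by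
        intro s hs
        rcases lt_or_ge (dotp c₀ s) M₀ with h | h
        · rw [wzero s hs h]; ring
        · rw [le_antisymm (hmax s (hPs s hs)) h]
      rw [Finset.sum_congr rfl this, ← Finset.sum_mul, hw1, one_mul]
    exact (memF z).2 ⟨hz.1, hzval⟩
  · intro hz
    exact ⟨hz.1, fun y hy => (ub y hy).trans_eq (valF z hz).symm⟩

end DimFaceAux

open DimFaceAux in
/-- For a nonempty face `F` of a nonempty polytope `P ⊆ ℝ^d`, the dimension of `F`
plus the dimension of its optimality cone equals `d`. -/
theorem dim_face_add_dim_optCone (d : ℕ) (P : Set (Fin d → ℝ))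
    (hP : IsPolytope P) (hne : P.Nonempty)
    (F : Set (Fin d → ℝ)) (hF : IsFaceOf P F) (hFne : F.Nonempty) :
    sdim F + sdim (optCone P F) = d := by
  obtain ⟨S, rfl⟩ := hP
  set P : Set (Fin d → ℝ) := convexHull ℝ (S : Set (Fin d → ℝ)) with hPdef
  obtain ⟨c₀, hc₀⟩ := hF
  have hc₀' : c₀ ∈ optCone P F := hc₀.symm
  obtain ⟨x₀, hx₀⟩ := hFne
  set e : EuclideanSpace ℝ (Fin d) ≃ₗ[ℝ] (Fin d → ℝ) := WithLp.linearEquiv 2 ℝ (Fin d → ℝ)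
  set V : Submodule ℝ (EuclideanSpace ℝ (Fin d)) :=
    (vectorSpan ℝ F).comap (e : EuclideanSpace ℝ (Fin d) →ₗ[ℝ] (Fin d → ℝ)) with hV
  -- every direction in the optimality cone is orthogonal to the face
  have hsub : optCone P F ⊆
      (Vᗮ.comap (e.symm : (Fin d → ℝ) →ₗ[ℝ] EuclideanSpace ℝ (Fin d)) : Set (Fin d → ℝ)) := by
    intro c hc
    refine (Submodule.mem_orthogonal V (WithLp.toLp 2 c)).2 ?_
    intro v hv
    have hker : vectorSpan ℝ F ≤ LinearMap.ker (dotL c) := by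
      rw [vectorSpan_def, Submodule.span_le]
      rintro _ ⟨x, hx, y, hy, rfl⟩
      have hx' : x ∈ maxFace P c := hc.symm ▸ hx
      have hy' : y ∈ maxFace P c := hc.symm ▸ hy
      have h1 : dotp c x = dotp c y :=
        le_antisymm (hy'.2 x hx'.1) (hx'.2 y hy'.1)
      have : dotL c (x -ᵥ y) = 0 := by
        rw [vsub_eq_sub, map_sub, ← dotp_eq_dotL, ← dotp_eq_dotL, h1, sub_self]
      exact this
    have h0 : dotL c (WithLp.ofLp v) = 0 := hker hv
    rw [← dotp_eq_dotL] at h0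
    have h3 := dotp_inner c (WithLp.ofLp v)
    simp only [WithLp.toLp_ofLp] at h3
    rw [← h3]
    exact h0
  -- the span of the optimality cone is exactly the orthogonal complement
  have hspan : vectorSpan ℝ (optCone P F) =
      Vᗮ.comap (e.symm : (Fin d → ℝ) →ₗ[ℝ] EuclideanSpace ℝ (Fin d)) := by
    apply le_antisymm
    · rw [vectorSpan_def, Submodule.span_le]
      rintro _ ⟨c₁, h1, c₂, h2, rfl⟩
      exact sub_mem (hsub h1) (hsub h2)
    · intro u hu
      -- dotp u is constant on F
      have hconst : ∀ x ∈ maxFace P c₀, dotp u x = dotp u x₀ := by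
        intro x hx
        have hxF : x ∈ F := hc₀ ▸ hx
        have hvs : WithLp.toLp 2 (x -ᵥ x₀) ∈ V := vsub_mem_vectorSpan ℝ hxF hx₀
        have h0 : inner (𝕜 := ℝ) (E := EuclideanSpace ℝ (Fin d)) (WithLp.toLp 2 (x -ᵥ x₀))
            (WithLp.toLp 2 u) = 0 :=
          (Submodule.mem_orthogonal V (WithLp.toLp 2 u)).1 hu _ hvs
        rw [← dotp_inner] at h0
        have : dotp u x - dotp u x₀ = 0 := by
          rw [dotp_eq_dotL, dotp_eq_dotL, ← map_sub, ← vsub_eq_sub, ← dotp_eq_dotL]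
          exact h0
        linarith
      obtain ⟨ε, hεpos, hmf⟩ := perturb S c₀ u x₀ (hc₀ ▸ hx₀) hconst
      have hmem1 : c₀ + ε • u ∈ optCone P F := by
        show maxFace P (c₀ + ε • u) = F
        rw [hmf, ← hc₀]
      have hvs : (c₀ + ε • u) -ᵥ c₀ ∈ vectorSpan ℝ (optCone P F) :=
        vsub_mem_vectorSpan ℝ hmem1 hc₀'
      have heq : (c₀ + ε • u) -ᵥ c₀ = ε • u := by
        rw [vsub_eq_sub]; abel
      rw [heq] at hvs
      have := Submodule.smul_mem (vectorSpan ℝ (optCone P F)) ε⁻¹ hvs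
      rwa [smul_smul, inv_mul_cancel₀ hεpos.ne', one_smul] at this
  have hrank : Module.finrank ℝ V + Module.finrank ℝ Vᗮ = d := by
    rw [Submodule.finrank_add_finrank_orthogonal]
    simp
  have h1 : sdim F = Module.finrank ℝ V := by
    rw [hV, Submodule.comap_equiv_eq_map_symm, LinearEquiv.finrank_map_eq]; rfl
  have h2 : sdim (optCone P F) = Module.finrank ℝ Vᗮ := by
    show Module.finrank ℝ
      (vectorSpan ℝ (optCone P F) : Submodule ℝ (Fin d → ℝ)) = _
    rw [hspan, Submodule.comap_equiv_eq_map_symm, LinearEquiv.finrank_map_eq]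
  rw [h1, h2]
  exact hrank
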